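/- Let p₀ ∈ P be such that 𝔸(p₀) : V → W is bijective with bounded inverse. Then there is a neighborhood of p₀ on which 𝔸(p) remains bijective with bounded inverse, so F is defined near p₀, and F is Fréchet differentiable at p₀ with derivative given by the bounded linear map h ↦ −𝔸(p₀)⁻¹( 𝔸(h)(F(p₀)) + 𝔹(h) ). -/

import Mathlib

set_option maxHeartbeats 1000000
set_option synthInstance.maxHeartbeats 400000

/-- Theorem 3.5: Fréchet differentiability of the abstract forward operator
`F(p) = 𝔸(p)⁻¹(ℓ − 𝔹(p))`.  If `𝔸(p₀)` is bijective with bounded inverse `B₀`, then on a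
neighborhood of `p₀` the operator `𝔸(p)` remains bijective with bounded inverse, so `F` is
defined near `p₀`, and `F` is Fréchet differentiable at `p₀` with derivative
`h ↦ −𝔸(p₀)⁻¹(𝔸(h)(F(p₀)) + 𝔹(h))`. -/
theorem forward_operator_frechet_derivative
    {P V W : Type*} [NormedAddCommGroup P] [NormedSpace ℝ P]
    [NormedAddCommGroup V] [NormedSpace ℝ V] [CompleteSpace V]
    [NormedAddCommGroup W] [NormedSpace ℝ W] [CompleteSpace W]
    (𝔸 : P →L[ℝ] V →L[ℝ] W) (𝔹 : P →L[ℝ] W) (ℓ : W)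
    (p₀ : P) (B₀ : W →L[ℝ] V)
    (hB₀l : ∀ v, B₀ (𝔸 p₀ v) = v) (hB₀r : ∀ w, 𝔸 p₀ (B₀ w) = w) :
    ∃ U ∈ nhds p₀, ∃ F : P → V,
      (∀ p ∈ U, ∃ Bp : W →L[ℝ] V,
        (∀ v, Bp (𝔸 p v) = v) ∧ (∀ w, 𝔸 p (Bp w) = w) ∧ F p = Bp (ℓ - 𝔹 p)) ∧
      HasFDerivAt F (-(B₀.comp (𝔸.flip (B₀ (ℓ - 𝔹 p₀)) + 𝔹))) p₀ := by
  -- T p = B₀ ∘ 𝔸 p  as a continuous linear map in p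
  set T : P →L[ℝ] (V →L[ℝ] V) := (ContinuousLinearMap.compL ℝ V W V B₀).comp 𝔸 with hT
  have hTapp : ∀ p, T p = B₀.comp (𝔸 p) := fun p => rfl
  have hT₀ : T p₀ = 1 := by
    ext v; simp [hTapp, ContinuousLinearMap.one_def, hB₀l v]
  -- the neighborhood
  refine ⟨{p | IsUnit (T p)}, ?_, fun p => Ring.inverse (T p) (B₀ (ℓ - 𝔹 p)), ?_, ?_⟩
  · exact T.continuous.continuousAt.preimage_mem_nhds
      (by rw [hT₀]; exact Units.isOpen.mem_nhds isUnit_one)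
  · rintro p hp
    obtain ⟨u, hu⟩ := hp
    refine ⟨(↑u⁻¹ : V →L[ℝ] V).comp B₀, ?_, ?_, ?_⟩
    · intro v
      have : (↑u : V →L[ℝ] V) v = B₀ (𝔸 p v) := by rw [hu]; rfl
      have h2 : (↑u⁻¹ : V →L[ℝ] V) ((↑u : V →L[ℝ] V) v) = v := by
        rw [← ContinuousLinearMap.comp_apply, ← ContinuousLinearMap.mul_def, u.inv_mul]; rfl
      simpa [this] using h2
    · intro w
      -- 𝔸 p = 𝔸 p₀ ∘ u
      have hA : ∀ v, 𝔸 p v = 𝔸 p₀ ((↑u : V →L[ℝ] V) v) := by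
        intro v
        rw [hu]
        simp [hTapp, hB₀r]
      rw [hA]
      have h2 : (↑u : V →L[ℝ] V) ((↑u⁻¹ : V →L[ℝ] V) (B₀ w)) = B₀ w := by
        rw [← ContinuousLinearMap.comp_apply, ← ContinuousLinearMap.mul_def, u.mul_inv]; rfl
      simp only [ContinuousLinearMap.comp_apply]
      rw [h2, hB₀r]
    · show Ring.inverse (T p) (B₀ (ℓ - 𝔹 p)) = _
      rw [← hu, Ring.inverse_unit, ContinuousLinearMap.comp_apply]
  · -- differentiability
    have h1 := hasFDerivAt_ringInverse (𝕜 := ℝ) (1 : (V →L[ℝ] V)ˣ)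
    rw [Units.val_one, ← hT₀] at h1
    have hg := h1.comp p₀ T.hasFDerivAt
    have hu' : HasFDerivAt (fun p => B₀ (ℓ - 𝔹 p)) (-(B₀.comp 𝔹)) p₀ := by
      have : HasFDerivAt (fun p => B₀ ℓ - (B₀.comp 𝔹) p) (-(B₀.comp 𝔹)) p₀ :=
        ((B₀.comp 𝔹).hasFDerivAt).const_sub (B₀ ℓ)
      simpa [map_sub] using this
    have := hg.clm_apply hu'
    convert this using 1
    ext h
    simp only [hT₀, ContinuousLinearMap.coe_comp', Function.comp_apply,
      ContinuousLinearMap.neg_apply, ContinuousLinearMap.add_apply,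
      ContinuousLinearMap.flip_apply, inv_one, Units.val_one,
      ContinuousLinearMap.mulLeftRight_apply, Ring.inverse_one,
      ContinuousLinearMap.one_apply, ContinuousLinearMap.one_def, map_add,
      ContinuousLinearMap.mul_apply]
    simp [hTapp, ContinuousLinearMap.one_def]
    rw [← hTapp p₀, hT₀, Ring.inverse_one]
    ext h
    simp [hTapp, ContinuousLinearMap.mulLeftRight_apply]
    abel
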